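/- Let N₀, N₁, N₂, N₃ be pairwise commuting bounded normal operators on a complex Hilbert space H. Then the following are equivalent: (a) N₃ is unitary, N₁ = N₂*·N₃, ‖N₁‖ ≤ 1, N₀*·N₀ = I − N₁*·N₁ and N₀·N₀* = I − N₁·N₁*; (b) there exist pairwise commuting bounded normal operators A₁₁, A₁₂, A₂₁, A₂₂ on H such that the block operator matrix [[A₁₁, A₁₂],[A₂₁, A₂₂]], acting on H ⊕ H by (x,y) ↦ (A₁₁x + A₁₂y, A₂₁x + A₂₂y), is unitary, and (N₀, N₁, N₂, N₃) = (A₂₁, A₁₁, A₂₂, A₁₁·A₂₂ − A₁₂·A₂₁). -/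

import Mathlib

noncomputable section

open NormedSpace

set_option linter.unusedSectionVars false
set_option maxHeartbeats 1000000

section Fuglede

variable {𝔸 : Type*} [NormedRing 𝔸] [StarRing 𝔸] [CStarRing 𝔸] [NormedAlgebra ℂ 𝔸]
  [CompleteSpace 𝔸] [StarModule ℂ 𝔸] [ContinuousStar 𝔸]

private lemma my_semiconj_exp {x y z : 𝔸} (h : x * y = y * z) :
    exp x * y = y * exp z := by
  have hpow : ∀ n : ℕ, x ^ n * y = y * z ^ n := by
    intro n
    induction n with
    | zero => simp
    | succ n ih => rw [pow_succ', mul_assoc, ih, ← mul_assoc, h, mul_assoc, ← pow_succ']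
  simp only [exp_eq_tsum ℂ]
  rw [← Summable.tsum_mul_right y (expSeries_summable' (𝕂 := ℂ) x),
    ← Summable.tsum_mul_left y (expSeries_summable' (𝕂 := ℂ) z)]
  congr 1
  funext n
  rw [smul_mul_assoc, mul_smul_comm, hpow n]

private lemma my_exp_mul_exp_neg (a : 𝔸) : exp a * exp (-a) = 1 := by
  letI : NormedAlgebra ℚ 𝔸 := .restrictScalars ℚ ℂ 𝔸
  rw [← exp_add_of_commute (Commute.refl a).neg_right, add_neg_cancel, exp_zero]

private lemma my_exp_neg_mul_exp (a : 𝔸) : exp (-a) * exp a = 1 := by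
  letI : NormedAlgebra ℚ 𝔸 := .restrictScalars ℚ ℂ 𝔸
  rw [← exp_add_of_commute (Commute.refl a).neg_left, neg_add_cancel, exp_zero]

/-- The Fuglede–Putnam theorem for elements of a C⋆-algebra (Rosenblum's proof). -/
theorem my_fuglede_putnam {N M T : 𝔸} (hN : IsStarNormal N) (hM : IsStarNormal M)
    (h : N * T = T * M) : star N * T = T * star M := by
  letI : NormedAlgebra ℚ 𝔸 := .restrictScalars ℚ ℂ 𝔸
  have step1 : ∀ t : ℂ, exp (t • N) * T = T * exp (t • M) :=
    fun t => my_semiconj_exp (by rw [smul_mul_assoc, mul_smul_comm, h])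
  have skew : ∀ (A : 𝔸), ∀ t : ℂ,
      exp (t • star A - (starRingEnd ℂ t) • A) ∈ unitary 𝔸 := by
    intro A t
    apply exp_mem_unitary_of_mem_skewAdjoint
    rw [skewAdjoint.mem_iff, star_sub, star_smul, star_smul, star_star,
      RCLike.star_def, starRingEnd_self_apply]
    abel
  set f : ℂ → 𝔸 := fun t => exp (t • star N) * T * exp (-(t • star M)) with hf
  have hdiff : Differentiable ℂ f := by
    have h1 : Differentiable ℂ fun t : ℂ => exp (t • star N) :=
      fun t => (hasDerivAt_exp_smul_const (𝕂 := ℂ) (star N) t).differentiableAt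
    have h3 : Differentiable ℂ fun t : ℂ => exp (t • star M) :=
      fun t => (hasDerivAt_exp_smul_const (𝕂 := ℂ) (star M) t).differentiableAt
    have h2 : Differentiable ℂ fun t : ℂ => exp (-(t • star M)) := by
      have := h3.comp differentiable_neg
      simpa [Function.comp_def, neg_smul] using this
    exact (h1.mul (differentiable_const T)).mul h2
  have hnorm : ∀ t : ℂ, ‖f t‖ = ‖T‖ := by
    intro t
    set c := starRingEnd ℂ t with hc
    have mid : exp (-(c • N)) * (T * exp (c • M)) = T := by
      rw [← step1 c, ← mul_assoc, my_exp_neg_mul_exp, one_mul]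
    have key : f t = exp (t • star N - c • N) * T *
        exp (c • M - t • star M) := by
      have e1 : exp (t • star N - c • N)
          = exp (t • star N) * exp (-(c • N)) := by
        rw [sub_eq_add_neg, exp_add_of_commute]
        exact (((hN.star_comm_self).smul_left t).smul_right c).neg_right
      have e2 : exp (c • M - t • star M)
          = exp (c • M) * exp (-(t • star M)) := by
        rw [sub_eq_add_neg, exp_add_of_commute]
        exact (((hM.star_comm_self.symm).smul_left c).smul_right t).neg_right
      rw [e1, e2, hf]
      simp only [mul_assoc]
      rw [← mul_assoc T, ← mul_assoc (exp (-(c • N))), mid]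
    have skew2 : exp (c • M - t • star M) ∈ unitary 𝔸 := by
      apply exp_mem_unitary_of_mem_skewAdjoint
      rw [skewAdjoint.mem_iff, star_sub, star_smul, star_smul, star_star,
        RCLike.star_def, starRingEnd_self_apply]
      abel
    rw [key, CStarRing.norm_mul_mem_unitary _ skew2,
      CStarRing.norm_mem_unitary_mul _ (skew N t)]
  have hbd : Bornology.IsBounded (Set.range f) := by
    rw [isBounded_iff_forall_norm_le]
    exact ⟨‖T‖, by rintro x ⟨t, rfl⟩; exact (hnorm t).le⟩
  have hconst : ∀ t : ℂ, f t = T := by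
    intro t
    have h0 : f 0 = T := by simp [hf, exp_zero]
    rw [← h0]
    exact hdiff.apply_eq_apply_of_bounded hbd t 0
  have heq : ∀ t : ℂ, exp (t • star N) * T = T * exp (t • star M) := by
    intro t
    have h1 : exp (t • star N) * T * exp (-(t • star M)) = T := hconst t
    have h2 : exp (t • star N) * T * exp (-(t • star M)) * exp (t • star M)
        = T * exp (t • star M) := by rw [h1]
    rwa [mul_assoc (exp (t • star N) * T), my_exp_neg_mul_exp, mul_one] at h2
  have d1 : HasDerivAt (fun t : ℂ => exp (t • star N) * T)
      (star N * exp ((0:ℂ) • star N) * T) 0 :=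
    (hasDerivAt_exp_smul_const' (𝕂 := ℂ) (star N) 0).mul_const T
  have d2 : HasDerivAt (fun t : ℂ => T * exp (t • star M))
      (T * (star M * exp ((0:ℂ) • star M))) 0 :=
    (hasDerivAt_exp_smul_const' (𝕂 := ℂ) (star M) 0).const_mul T
  have hfun : (fun t : ℂ => exp (t • star N) * T) = fun t : ℂ => T * exp (t • star M) :=
    funext heq
  rw [hfun] at d1
  have := d1.unique d2
  simpa [zero_smul, exp_zero] using this

/-- Fuglede's theorem: commuting normal elements star-commute. -/
theorem my_commute_star_left {a b : 𝔸} (ha : IsStarNormal a) (h : Commute a b) :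
    Commute (star a) b :=
  my_fuglede_putnam ha ha h.eq

end Fuglede

variable {H : Type*} [NormedAddCommGroup H] [InnerProductSpace ℂ H] [CompleteSpace H]

/-- The block operator matrix `[[A, B], [C, D]]` acting on the Hilbert space
`H ⊕ H` (i.e. `WithLp 2 (H × H)`) by `(x, y) ↦ (A x + B y, C x + D y)`. -/
def blockOp (A B C D : H →L[ℂ] H) :
    WithLp 2 (H × H) →L[ℂ] WithLp 2 (H × H) :=
  (((WithLp.prodContinuousLinearEquiv 2 ℂ H H).symm :
      (H × H) →L[ℂ] WithLp 2 (H × H)) ∘L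
    ((A ∘L (ContinuousLinearMap.fst ℂ H H) + B ∘L (ContinuousLinearMap.snd ℂ H H)).prod
       (C ∘L (ContinuousLinearMap.fst ℂ H H) + D ∘L (ContinuousLinearMap.snd ℂ H H)))) ∘L
    ((WithLp.prodContinuousLinearEquiv 2 ℂ H H : WithLp 2 (H × H) ≃L[ℂ] (H × H)) :
      WithLp 2 (H × H) →L[ℂ] (H × H))

lemma blockOp_apply_fst (A B C D : H →L[ℂ] H) (x : WithLp 2 (H × H)) :
    (blockOp A B C D x).fst = A x.fst + B x.snd := rfl

lemma blockOp_apply_snd (A B C D : H →L[ℂ] H) (x : WithLp 2 (H × H)) :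
    (blockOp A B C D x).snd = C x.fst + D x.snd := rfl

lemma blockOp_mul (A B C D A' B' C' D' : H →L[ℂ] H) :
    blockOp A B C D * blockOp A' B' C' D' =
      blockOp (A * A' + B * C') (A * B' + B * D') (C * A' + D * C') (C * B' + D * D') := by
  ext x : 1
  apply (WithLp.equiv 2 (H × H)).injective
  ext
  · show (blockOp A B C D (blockOp A' B' C' D' x)).fst = _
    simp [blockOp_apply_fst, blockOp_apply_snd, ContinuousLinearMap.mul_apply, map_add]
    abel
  · show (blockOp A B C D (blockOp A' B' C' D' x)).snd = _
    simp [blockOp_apply_fst, blockOp_apply_snd, ContinuousLinearMap.mul_apply, map_add]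
    abel

lemma blockOp_one : blockOp (1 : H →L[ℂ] H) 0 0 1 = 1 := by
  ext x : 1
  apply (WithLp.equiv 2 (H × H)).injective
  ext
  · show (blockOp (1 : H →L[ℂ] H) 0 0 1 x).fst = x.fst
    simp [blockOp_apply_fst]
  · show (blockOp (1 : H →L[ℂ] H) 0 0 1 x).snd = x.snd
    simp [blockOp_apply_snd]

open ContinuousLinearMap in
lemma star_blockOp (A B C D : H →L[ℂ] H) :
    star (blockOp A B C D) = blockOp (star A) (star C) (star B) (star D) := by
  rw [star_eq_adjoint]
  symm
  rw [eq_adjoint_iff]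
  intro x y
  rw [WithLp.prod_inner_apply, WithLp.prod_inner_apply]
  simp only [WithLp.ofLp_fst, WithLp.ofLp_snd]
  rw [blockOp_apply_fst, blockOp_apply_snd, blockOp_apply_fst, blockOp_apply_snd]
  simp only [star_eq_adjoint, inner_add_left, inner_add_right,
    ContinuousLinearMap.adjoint_inner_left]
  ring

lemma blockOp_inj {A B C D A' B' C' D' : H →L[ℂ] H}
    (h : blockOp A B C D = blockOp A' B' C' D') :
    A = A' ∧ B = B' ∧ C = C' ∧ D = D' := by
  have hfst : ∀ x : WithLp 2 (H × H),
      (blockOp A B C D x).fst = (blockOp A' B' C' D' x).fst := fun x => by rw [h]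
  have hsnd : ∀ x : WithLp 2 (H × H),
      (blockOp A B C D x).snd = (blockOp A' B' C' D' x).snd := fun x => by rw [h]
  refine ⟨?_, ?_, ?_, ?_⟩
  · ext v
    simpa [blockOp_apply_fst] using hfst ((WithLp.equiv 2 (H × H)).symm (v, 0))
  · ext v
    simpa [blockOp_apply_fst] using hfst ((WithLp.equiv 2 (H × H)).symm (0, v))
  · ext v
    simpa [blockOp_apply_snd] using hsnd ((WithLp.equiv 2 (H × H)).symm (v, 0))
  · ext v
    simpa [blockOp_apply_snd] using hsnd ((WithLp.equiv 2 (H × H)).symm (0, v))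

lemma opNorm_le_one_of_defect {A C : H →L[ℂ] H} (h : star A * A + star C * C = 1) :
    ‖A‖ ≤ 1 := by
  refine A.opNorm_le_bound zero_le_one fun x => ?_
  rw [one_mul]
  have hC : (‖A x‖ : ℂ)^2 + (‖C x‖ : ℂ)^2 = (‖x‖ : ℂ)^2 := by
    calc (‖A x‖ : ℂ)^2 + (‖C x‖ : ℂ)^2
        = inner ℂ (A x) (A x) + inner ℂ (C x) (C x) := by
          simp [inner_self_eq_norm_sq_to_K]
      _ = inner ℂ ((star A * A) x + (star C * C) x) x := by
          simp only [ContinuousLinearMap.star_eq_adjoint, ContinuousLinearMap.mul_apply,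
            ContinuousLinearMap.adjoint_inner_left, inner_add_left]
      _ = inner ℂ (((star A * A + star C * C) : H →L[ℂ] H) x) x := by
          simp [ContinuousLinearMap.add_apply]
      _ = inner ℂ x x := by rw [h]; simp
      _ = (‖x‖ : ℂ)^2 := by simp [inner_self_eq_norm_sq_to_K]
  have hR : ‖A x‖^2 + ‖C x‖^2 = ‖x‖^2 := by
    have := congrArg Complex.re hC
    simpa [← Complex.ofReal_pow] using this
  nlinarith [norm_nonneg (A x), norm_nonneg (C x), norm_nonneg x, sq_nonneg (‖A x‖ - ‖x‖)]

section CommAlg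

variable {𝔸 : Type*} [NormedRing 𝔸] [StarRing 𝔸] [NormedAlgebra ℂ 𝔸] [StarModule ℂ 𝔸]

/-- Equational consequences of block unitarity, proved inside the commutative
star subalgebra generated by the four commuting normal entries. -/
lemma my_backward_equations (a b c d : 𝔸)
    (hcomm : ∀ x ∈ ({a, b, c, d} : Set 𝔸), ∀ y ∈ ({a, b, c, d} : Set 𝔸), x * y = y * x)
    (hcommstar : ∀ x ∈ ({a, b, c, d} : Set 𝔸), ∀ y ∈ ({a, b, c, d} : Set 𝔸),
      x * star y = star y * x)
    (E1 : star a * a + star c * c = 1) (E2 : star a * b + star c * d = 0)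
    (E3 : star b * a + star d * c = 0) (E4 : star b * b + star d * d = 1) :
    (star d * star a - star c * star b) * (a * d - b * c) = 1 ∧
    (a * d - b * c) * (star d * star a - star c * star b) = 1 ∧
    a = star d * (a * d - b * c) ∧
    star c * c = 1 - star a * a ∧
    c * star c = 1 - a * star a := by
  set S := StarAlgebra.adjoin ℂ ({a, b, c, d} : Set 𝔸) with hSdef
  letI : CommRing S := StarAlgebra.adjoinCommRingOfComm ℂ hcomm hcommstar
  set ea : S := ⟨a, StarAlgebra.subset_adjoin ℂ _ (by simp)⟩ with hea
  set eb : S := ⟨b, StarAlgebra.subset_adjoin ℂ _ (by simp)⟩ with heb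
  set ec : S := ⟨c, StarAlgebra.subset_adjoin ℂ _ (by simp)⟩ with hec
  set ed : S := ⟨d, StarAlgebra.subset_adjoin ℂ _ (by simp)⟩ with hed
  have cmul : ∀ x y : S, ((x * y : S) : 𝔸) = (x : 𝔸) * (y : 𝔸) := fun _ _ => by
    with_unfolding_all rfl
  have cadd : ∀ x y : S, ((x + y : S) : 𝔸) = (x : 𝔸) + (y : 𝔸) := fun _ _ => by
    with_unfolding_all rfl
  have csub : ∀ x y : S, ((x - y : S) : 𝔸) = (x : 𝔸) - (y : 𝔸) := fun _ _ => by
    with_unfolding_all rfl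
  have cneg : ∀ x : S, ((-x : S) : 𝔸) = -(x : 𝔸) := fun _ => by
    with_unfolding_all rfl
  have cstar : ∀ x : S, ((star x : S) : 𝔸) = star (x : 𝔸) := fun _ => by
    with_unfolding_all rfl
  have cone : ((1 : S) : 𝔸) = 1 := by with_unfolding_all rfl
  have K1 : star ea * ea + star ec * ec = 1 :=
    Subtype.ext (by simp only [cmul, cadd, cstar, cone]; exact E1)
  have K2 : star ea * eb + star ec * ed = 0 :=
    Subtype.ext (by simp only [cmul, cadd, cstar]; exact E2)
  have K3 : star eb * ea + star ed * ec = 0 :=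
    Subtype.ext (by simp only [cmul, cadd, cstar]; exact E3)
  have K4 : star eb * eb + star ed * ed = 1 :=
    Subtype.ext (by simp only [cmul, cadd, cstar, cone]; exact E4)
  have G1 : (star ed * star ea - star ec * star eb) * (ea * ed - eb * ec) = 1 := by
    linear_combination (star eb * eb + star ed * ed) * K1 + K4
      - (star ea * eb + star ec * ed) * K3
  have G2 : (ea * ed - eb * ec) * (star ed * star ea - star ec * star eb) = 1 := by
    linear_combination (star eb * eb + star ed * ed) * K1 + K4
      - (star ea * eb + star ec * ed) * K3
  have G3 : ea = star ed * (ea * ed - eb * ec) := by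
    linear_combination (-ea) * K4 + eb * K3
  have G5 : star ec * ec = 1 - star ea * ea := by linear_combination K1
  have G6 : ec * star ec = 1 - ea * star ea := by linear_combination K1
  refine ⟨?_, ?_, ?_, ?_, ?_⟩
  · simpa only [cmul, csub, cstar, cone] using congrArg Subtype.val G1
  · simpa only [cmul, csub, cstar, cone] using congrArg Subtype.val G2
  · simpa only [cmul, csub, cstar] using congrArg Subtype.val G3
  · simpa only [cmul, csub, cstar, cone] using congrArg Subtype.val G5
  · simpa only [cmul, csub, cstar, cone] using congrArg Subtype.val G6

/-- Equational content of the forward direction: the block matrix built from an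
`ℍ`-unitary quadruple has unitary columns and rows and the correct determinant. -/
lemma my_forward_equations (n0 n1 n2 n3 : 𝔸)
    (hcomm : ∀ x ∈ ({n0, n1, n2, n3} : Set 𝔸), ∀ y ∈ ({n0, n1, n2, n3} : Set 𝔸), x * y = y * x)
    (hcommstar : ∀ x ∈ ({n0, n1, n2, n3} : Set 𝔸), ∀ y ∈ ({n0, n1, n2, n3} : Set 𝔸),
      x * star y = star y * x)
    (k3 : star n3 * n3 = 1) (k3' : n3 * star n3 = 1)
    (k1 : n1 = star n2 * n3) (k1' : star n1 = star n3 * n2)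
    (k0 : star n0 * n0 = 1 - star n1 * n1) (k0' : n0 * star n0 = 1 - n1 * star n1) :
    star n1 * n1 + star n0 * n0 = 1 ∧
    star n1 * (-(star n0 * n3)) + star n0 * n2 = 0 ∧
    star (-(star n0 * n3)) * n1 + star n2 * n0 = 0 ∧
    star (-(star n0 * n3)) * (-(star n0 * n3)) + star n2 * n2 = 1 ∧
    n1 * star n1 + (-(star n0 * n3)) * star (-(star n0 * n3)) = 1 ∧
    n1 * star n0 + (-(star n0 * n3)) * star n2 = 0 ∧
    n0 * star n1 + n2 * star (-(star n0 * n3)) = 0 ∧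
    n0 * star n0 + n2 * star n2 = 1 ∧
    n3 = n1 * n2 - (-(star n0 * n3)) * n0 := by
  set S := StarAlgebra.adjoin ℂ ({n0, n1, n2, n3} : Set 𝔸) with hSdef
  letI : CommRing S := StarAlgebra.adjoinCommRingOfComm ℂ hcomm hcommstar
  set e0 : S := ⟨n0, StarAlgebra.subset_adjoin ℂ _ (by simp)⟩ with he0
  set e1 : S := ⟨n1, StarAlgebra.subset_adjoin ℂ _ (by simp)⟩ with he1
  set e2 : S := ⟨n2, StarAlgebra.subset_adjoin ℂ _ (by simp)⟩ with he2
  set e3 : S := ⟨n3, StarAlgebra.subset_adjoin ℂ _ (by simp)⟩ with he3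
  have cmul : ∀ x y : S, ((x * y : S) : 𝔸) = (x : 𝔸) * (y : 𝔸) := fun _ _ => by
    with_unfolding_all rfl
  have cadd : ∀ x y : S, ((x + y : S) : 𝔸) = (x : 𝔸) + (y : 𝔸) := fun _ _ => by
    with_unfolding_all rfl
  have csub : ∀ x y : S, ((x - y : S) : 𝔸) = (x : 𝔸) - (y : 𝔸) := fun _ _ => by
    with_unfolding_all rfl
  have cneg : ∀ x : S, ((-x : S) : 𝔸) = -(x : 𝔸) := fun _ => by
    with_unfolding_all rfl
  have cstar : ∀ x : S, ((star x : S) : 𝔸) = star (x : 𝔸) := fun _ => by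
    with_unfolding_all rfl
  have cone : ((1 : S) : 𝔸) = 1 := by with_unfolding_all rfl
  have K3 : star e3 * e3 = 1 :=
    Subtype.ext (by simp only [cmul, cstar, cone]; exact k3)
  have K3' : e3 * star e3 = 1 :=
    Subtype.ext (by simp only [cmul, cstar, cone]; exact k3')
  have K1 : e1 = star e2 * e3 :=
    Subtype.ext (by simp only [cmul, cstar]; exact k1)
  have K1' : star e1 = star e3 * e2 :=
    Subtype.ext (by simp only [cmul, cstar]; exact k1')
  have K0 : star e0 * e0 = 1 - star e1 * e1 :=
    Subtype.ext (by simp only [cmul, cstar, csub, cone]; exact k0)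
  have K0' : e0 * star e0 = 1 - e1 * star e1 :=
    Subtype.ext (by simp only [cmul, cstar, csub, cone]; exact k0')
  have G1 : star e1 * e1 + star e0 * e0 = 1 := by linear_combination K0
  have G2 : star e1 * (-(star e0 * e3)) + star e0 * e2 = 0 := by
    linear_combination (-(star e0 * e3)) * K1' + (-(star e0 * e2)) * K3
  have G3 : (-(star e3 * e0)) * e1 + star e2 * e0 = 0 := by
    linear_combination (-(star e3 * e0)) * K1 + (-(star e2 * e0)) * K3
  have G4 : (-(star e3 * e0)) * (-(star e0 * e3)) + star e2 * e2 = 1 := by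
    linear_combination (e0 * star e0) * K3 + K0' - (star e1) * K1
      - (star e2 * e3) * K1' - (star e2 * e2) * K3
  have G5 : e1 * star e1 + (-(star e0 * e3)) * (-(star e3 * e0)) = 1 := by
    linear_combination (star e0 * e0) * K3' + K0
  have G6 : e1 * star e0 + (-(star e0 * e3)) * star e2 = 0 := by
    linear_combination (star e0) * K1
  have G7 : e0 * star e1 + e2 * (-(star e3 * e0)) = 0 := by
    linear_combination e0 * K1'
  have G8 : e0 * star e0 + e2 * star e2 = 1 := by
    linear_combination K0' - (star e1) * K1 - (star e2 * e3) * K1' - (star e2 * e2) * K3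
  have G9 : e3 = e1 * e2 - (-(star e0 * e3)) * e0 := by
    linear_combination (e1 * e2) * K3 + (e1 * e3) * K1' - e3 * K0
  refine ⟨?_, ?_, ?_, ?_, ?_, ?_, ?_, ?_, ?_⟩
  · simpa only [cmul, cadd, cstar, cone] using congrArg Subtype.val G1
  · simpa only [cmul, cadd, cneg, cstar, (show ((0 : S) : 𝔸) = 0 by with_unfolding_all rfl)] using congrArg Subtype.val G2
  · rw [star_neg, star_mul, star_star]
    simpa only [cmul, cadd, cneg, cstar, (show ((0 : S) : 𝔸) = 0 by with_unfolding_all rfl)] using congrArg Subtype.val G3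
  · rw [star_neg, star_mul, star_star]
    simpa only [cmul, cadd, cneg, cstar, cone] using congrArg Subtype.val G4
  · rw [star_neg, star_mul, star_star]
    simpa only [cmul, cadd, cneg, cstar, cone] using congrArg Subtype.val G5
  · simpa only [cmul, cadd, cneg, cstar, (show ((0 : S) : 𝔸) = 0 by with_unfolding_all rfl)] using congrArg Subtype.val G6
  · rw [star_neg, star_mul, star_star]
    simpa only [cmul, cadd, cneg, cstar, (show ((0 : S) : 𝔸) = 0 by with_unfolding_all rfl)] using congrArg Subtype.val G7
  · simpa only [cmul, cadd, cstar, cone] using congrArg Subtype.val G8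
  · simpa only [cmul, csub, cneg, cstar] using congrArg Subtype.val G9

end CommAlg

/-- Characterization of `ℍ`-unitaries: a commuting quadruple of normal operators
satisfies the defining equations of an `ℍ`-unitary if and only if it arises as
`(A₂₁, A₁₁, A₂₂, A₁₁A₂₂ − A₁₂A₂₁)` from a `2 × 2` unitary block matrix with
commuting normal entries. -/
theorem hexablock_unitary_iff_block_unitary
    (N₀ N₁ N₂ N₃ : H →L[ℂ] H)
    (hc01 : Commute N₀ N₁) (hc02 : Commute N₀ N₂) (hc03 : Commute N₀ N₃)
    (hc12 : Commute N₁ N₂) (hc13 : Commute N₁ N₃) (hc23 : Commute N₂ N₃)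
    (hn0 : IsStarNormal N₀) (hn1 : IsStarNormal N₁)
    (hn2 : IsStarNormal N₂) (hn3 : IsStarNormal N₃) :
    (star N₃ * N₃ = 1 ∧ N₃ * star N₃ = 1 ∧ N₁ = star N₂ * N₃ ∧ ‖N₁‖ ≤ 1 ∧
      star N₀ * N₀ = 1 - star N₁ * N₁ ∧ N₀ * star N₀ = 1 - N₁ * star N₁) ↔
    (∃ A₁₁ A₁₂ A₂₁ A₂₂ : H →L[ℂ] H,
      (Commute A₁₁ A₁₂ ∧ Commute A₁₁ A₂₁ ∧ Commute A₁₁ A₂₂ ∧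
        Commute A₁₂ A₂₁ ∧ Commute A₁₂ A₂₂ ∧ Commute A₂₁ A₂₂) ∧
      (IsStarNormal A₁₁ ∧ IsStarNormal A₁₂ ∧ IsStarNormal A₂₁ ∧ IsStarNormal A₂₂) ∧
      (star (blockOp A₁₁ A₁₂ A₂₁ A₂₂) * blockOp A₁₁ A₁₂ A₂₁ A₂₂ = 1 ∧
        blockOp A₁₁ A₁₂ A₂₁ A₂₂ * star (blockOp A₁₁ A₁₂ A₂₁ A₂₂) = 1) ∧
      N₀ = A₂₁ ∧ N₁ = A₁₁ ∧ N₂ = A₂₂ ∧ N₃ = A₁₁ * A₂₂ - A₁₂ * A₂₁) := by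
  constructor
  · rintro ⟨h3, h3', h1, hnorm1, h0, h0'⟩
    have h1' : star N₁ = star N₃ * N₂ := by rw [h1, star_mul, star_star]
    -- Fuglede commutation toolkit
    have s00 := hn0.star_comm_self
    have s11 := hn1.star_comm_self
    have s22 := hn2.star_comm_self
    have s33 := hn3.star_comm_self
    have s01 : Commute (star N₀) N₁ := my_commute_star_left hn0 hc01
    have s02 : Commute (star N₀) N₂ := my_commute_star_left hn0 hc02
    have s03 : Commute (star N₀) N₃ := my_commute_star_left hn0 hc03
    have s10 : Commute (star N₁) N₀ := my_commute_star_left hn1 hc01.symm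
    have s12 : Commute (star N₁) N₂ := my_commute_star_left hn1 hc12
    have s13 : Commute (star N₁) N₃ := my_commute_star_left hn1 hc13
    have s20 : Commute (star N₂) N₀ := my_commute_star_left hn2 hc02.symm
    have s21 : Commute (star N₂) N₁ := my_commute_star_left hn2 hc12.symm
    have s23 : Commute (star N₂) N₃ := my_commute_star_left hn2 hc23
    have s30 : Commute (star N₃) N₀ := my_commute_star_left hn3 hc03.symm
    have s31 : Commute (star N₃) N₁ := my_commute_star_left hn3 hc13.symm
    have s32 : Commute (star N₃) N₂ := my_commute_star_left hn3 hc23.symm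
    have hcomm : ∀ x ∈ ({N₀, N₁, N₂, N₃} : Set (H →L[ℂ] H)),
        ∀ y ∈ ({N₀, N₁, N₂, N₃} : Set (H →L[ℂ] H)), x * y = y * x := by
      intro x hx y hy
      simp only [Set.mem_insert_iff, Set.mem_singleton_iff] at hx hy
      rcases hx with rfl | rfl | rfl | rfl <;> rcases hy with rfl | rfl | rfl | rfl <;>
        first
          | rfl
          | exact hc01.eq | exact hc01.symm.eq | exact hc02.eq | exact hc02.symm.eq
          | exact hc03.eq | exact hc03.symm.eq | exact hc12.eq | exact hc12.symm.eq
          | exact hc13.eq | exact hc13.symm.eq | exact hc23.eq | exact hc23.symm.eq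
    have hcommstar : ∀ x ∈ ({N₀, N₁, N₂, N₃} : Set (H →L[ℂ] H)),
        ∀ y ∈ ({N₀, N₁, N₂, N₃} : Set (H →L[ℂ] H)), x * star y = star y * x := by
      intro x hx y hy
      simp only [Set.mem_insert_iff, Set.mem_singleton_iff] at hx hy
      rcases hx with rfl | rfl | rfl | rfl <;> rcases hy with rfl | rfl | rfl | rfl <;>
        first
          | exact s00.eq.symm | exact s11.eq.symm | exact s22.eq.symm | exact s33.eq.symm
          | exact s01.eq.symm | exact s02.eq.symm | exact s03.eq.symm
          | exact s10.eq.symm | exact s12.eq.symm | exact s13.eq.symm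
          | exact s20.eq.symm | exact s21.eq.symm | exact s23.eq.symm
          | exact s30.eq.symm | exact s31.eq.symm | exact s32.eq.symm
    obtain ⟨C1, C2, C3, C4, C5, C6, C7, C8, C9⟩ :=
      my_forward_equations N₀ N₁ N₂ N₃ hcomm hcommstar h3 h3' h1 h1' h0 h0'
    refine ⟨N₁, -(star N₀ * N₃), N₀, N₂,
      ⟨(s01.symm.mul_right hc13).neg_right, hc01.symm, hc12,
        ((s00.mul_left hc03.symm)).neg_left, (s02.mul_left hc23.symm).neg_left, hc02⟩,
      ⟨hn1, ?_, hn0, hn2⟩, ⟨?_, ?_⟩, rfl, rfl, rfl, ?_⟩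
    · constructor
      rw [star_neg, star_mul, star_star]
      have c1 : Commute (star N₃) (star N₀ * N₃) :=
        (hc03.star_star.symm).mul_right s33
      have c2 : Commute N₀ (star N₀ * N₃) := (s00.symm).mul_right hc03
      exact (c1.mul_left c2).neg_left.neg_right
    · rw [star_blockOp, blockOp_mul, C1, C2, C3, C4, blockOp_one]
    · rw [star_blockOp, blockOp_mul, C5, C6, C7, C8, blockOp_one]
    · exact C9
  · rintro ⟨a11, a12, a21, a22, ⟨c1, c2, c3, c4, c5, c6⟩, ⟨m1, m2, m3, m4⟩,
      ⟨hU1, hU2⟩, rfl, rfl, rfl, rfl⟩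
    rw [star_blockOp, blockOp_mul,
      show (1 : WithLp 2 (H × H) →L[ℂ] WithLp 2 (H × H)) = blockOp 1 0 0 1
        from blockOp_one.symm] at hU1 hU2
    obtain ⟨E1, E2, E3, E4⟩ := blockOp_inj hU1
    have hcomm : ∀ x ∈ ({N₁, a12, N₀, N₂} : Set (H →L[ℂ] H)),
        ∀ y ∈ ({N₁, a12, N₀, N₂} : Set (H →L[ℂ] H)), x * y = y * x := by
      intro x hx y hy
      simp only [Set.mem_insert_iff, Set.mem_singleton_iff] at hx hy
      rcases hx with rfl | rfl | rfl | rfl <;> rcases hy with rfl | rfl | rfl | rfl <;>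
        first
          | rfl
          | exact c1.eq | exact c1.symm.eq | exact c2.eq | exact c2.symm.eq
          | exact c3.eq | exact c3.symm.eq | exact c4.eq | exact c4.symm.eq
          | exact c5.eq | exact c5.symm.eq | exact c6.eq | exact c6.symm.eq
    have s00 := m1.star_comm_self
    have s11 := m2.star_comm_self
    have s22 := m3.star_comm_self
    have s33 := m4.star_comm_self
    have s01 : Commute (star N₁) a12 := my_commute_star_left m1 c1
    have s02 : Commute (star N₁) N₀ := my_commute_star_left m1 c2
    have s03 : Commute (star N₁) N₂ := my_commute_star_left m1 c3
    have s10 : Commute (star a12) N₁ := my_commute_star_left m2 c1.symm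
    have s12 : Commute (star a12) N₀ := my_commute_star_left m2 c4
    have s13 : Commute (star a12) N₂ := my_commute_star_left m2 c5
    have s20 : Commute (star N₀) N₁ := my_commute_star_left m3 c2.symm
    have s21 : Commute (star N₀) a12 := my_commute_star_left m3 c4.symm
    have s23 : Commute (star N₀) N₂ := my_commute_star_left m3 c6
    have s30 : Commute (star N₂) N₁ := my_commute_star_left m4 c3.symm
    have s31 : Commute (star N₂) a12 := my_commute_star_left m4 c5.symm
    have s32 : Commute (star N₂) N₀ := my_commute_star_left m4 c6.symm
    have hcommstar : ∀ x ∈ ({N₁, a12, N₀, N₂} : Set (H →L[ℂ] H)),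
        ∀ y ∈ ({N₁, a12, N₀, N₂} : Set (H →L[ℂ] H)), x * star y = star y * x := by
      intro x hx y hy
      simp only [Set.mem_insert_iff, Set.mem_singleton_iff] at hx hy
      rcases hx with rfl | rfl | rfl | rfl <;> rcases hy with rfl | rfl | rfl | rfl <;>
        first
          | exact s00.eq.symm | exact s11.eq.symm | exact s22.eq.symm | exact s33.eq.symm
          | exact s01.eq.symm | exact s02.eq.symm | exact s03.eq.symm
          | exact s10.eq.symm | exact s12.eq.symm | exact s13.eq.symm
          | exact s20.eq.symm | exact s21.eq.symm | exact s23.eq.symm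
          | exact s30.eq.symm | exact s31.eq.symm | exact s32.eq.symm
    obtain ⟨G1, G2, G3, G5, G6⟩ :=
      my_backward_equations N₁ a12 N₀ N₂ hcomm hcommstar E1 E2 E3 E4
    refine ⟨?_, ?_, G3, opNorm_le_one_of_defect E1, G5, G6⟩
    · rw [star_sub, star_mul, star_mul]
      exact G1
    · rw [star_sub, star_mul, star_mul]
      exact G2

end
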